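/- If L ⊆ Σ^ω is recognized by some deterministic co-Büchi automaton, then the equivalence relation ≡_L on pairs of finite words has only finitely many equivalence classes. -/

import Mathlib

open Classical

/-- Rank of a transition in a co-Büchi automaton: `one` or `two`. -/
inductive Rk | one | two
deriving DecidableEq

/-- A co-Büchi automaton over alphabet `A` with state type `Q`:
initial states and a transition relation where each transition carries a rank. -/
structure CoBuchi (A : Type) (Q : Type) where
  init : Set Q
  delta : Set (Q × A × Rk × Q)

namespace CoBuchi

variable {A Q : Type}

/-- Every state has an outgoing transition on every letter. -/
def Total (M : CoBuchi A Q) : Prop :=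
  ∀ q a, ∃ r q', (q, a, r, q') ∈ M.delta

/-- The prefix `α[0..n-1]` of an infinite word. -/
def prefW (α : ℕ → A) (n : ℕ) : List A := (List.range n).map α

/-- The infinite word `a·w`. -/
def consW (a : A) (w : ℕ → A) : ℕ → A := fun n => match n with
  | 0 => a
  | Nat.succ k => w k

/-- `L(M,q)`: infinite words having a run from `q` with only finitely many rank-1
transitions. -/
def LangFrom (M : CoBuchi A Q) (q : Q) : Set (ℕ → A) :=
  { w | ∃ (ρ : ℕ → Q) (r : ℕ → Rk), ρ 0 = q ∧
        (∀ n, (ρ n, w n, r n, ρ (n + 1)) ∈ M.delta) ∧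
        ∃ N, ∀ n, N ≤ n → r n = Rk.two }

/-- `L(M)`: the language of the automaton. -/
def Lang (M : CoBuchi A Q) : Set (ℕ → A) :=
  { w | ∃ q ∈ M.init, w ∈ M.LangFrom q }

/-- `q →₂^w q'`: a finite run from `q` to `q'` on `w` using only rank-2 transitions. -/
def SafeReach (M : CoBuchi A Q) : Q → List A → Q → Prop
  | q, [], q' => q = q'
  | q, a :: w, q' => ∃ p, (q, a, Rk.two, p) ∈ M.delta ∧ SafeReach M p w q'

/-- A finite run from `q` to `q'` on `w` using transitions of any rank. -/
def Reach (M : CoBuchi A Q) : Q → List A → Q → Prop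
  | q, [], q' => q = q'
  | q, a :: w, q' => ∃ r p, (q, a, r, p) ∈ M.delta ∧ Reach M p w q'

/-- Safe language of a state. -/
def Lsf (M : CoBuchi A Q) (q : Q) : Set (List A) := { w | ∃ q', M.SafeReach q w q' }

/-- Semantically-deterministic: every transition respects residuals. -/
def SemDet (M : CoBuchi A Q) : Prop :=
  ∀ p a rk q, (p, a, rk, q) ∈ M.delta →
    M.LangFrom q = { w | consW a w ∈ M.LangFrom p }

/-- Unsafe-saturated: all residual-respecting rank-1 transitions are present. -/
def UnsafeSat (M : CoBuchi A Q) : Prop :=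
  ∀ p a q, M.LangFrom q = { w | consW a w ∈ M.LangFrom p } →
    (p, a, Rk.one, q) ∈ M.delta

/-- Safe-deterministic: at most one rank-2 transition per state and letter. -/
def SafeDet (M : CoBuchi A Q) : Prop :=
  ∀ p a q q', (p, a, Rk.two, q) ∈ M.delta → (p, a, Rk.two, q') ∈ M.delta → q = q'

/-- Normalized: every rank-2 transition can be completed to a rank-2 loop. -/
def Normalized (M : CoBuchi A Q) : Prop :=
  ∀ q a q', (q, a, Rk.two, q') ∈ M.delta → ∃ x, M.SafeReach q' x q

/-- Deterministic: one initial state, exactly one transition per state and letter. -/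
def Deterministic (M : CoBuchi A Q) : Prop :=
  (∃! q, q ∈ M.init) ∧ ∀ p a, ∃! t : Rk × Q, (p, a, t.1, t.2) ∈ M.delta

/-- History-deterministic: a strategy `σ : Σ* → Q` resolving the nondeterminism,
whose run on every `α ∈ L(M)` can be ranked with finitely many rank-1 transitions. -/
def HistoryDet (M : CoBuchi A Q) : Prop :=
  ∃ σ : List A → Q, σ [] ∈ M.init ∧
    (∀ w a, ∃ rk, (σ w, a, rk, σ (w ++ [a])) ∈ M.delta) ∧
    ∀ α ∈ M.Lang, ∃ r : ℕ → Rk,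
      (∀ n, (σ (prefW α n), α n, r n, σ (prefW α (n + 1))) ∈ M.delta) ∧
      ∃ N, ∀ n, N ≤ n → r n = Rk.two

/-- `q` and `q'` are in the same safe SCC (mutually reachable via rank-2 runs). -/
def SameSafeSCC (M : CoBuchi A Q) (q q' : Q) : Prop :=
  (∃ x, M.SafeReach q x q') ∧ (∃ y, M.SafeReach q' y q)

end CoBuchi

section LangDefs

variable {A : Type} [Nonempty A]

/-- The infinite word `u·w`. -/
def appW (u : List A) (w : ℕ → A) : ℕ → A :=
  fun n => if h : n < u.length then u.get ⟨n, h⟩ else w (n - u.length)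

/-- The infinite word `v^ω` (arbitrary if `v = ε`). -/
noncomputable def iterW (v : List A) : ℕ → A :=
  fun n =>
    if h : v = [] then Classical.arbitrary A
    else v.get ⟨n % v.length, Nat.mod_lt _ (List.length_pos_of_ne_nil h)⟩

/-- The ultimately periodic word `u v^ω`. -/
noncomputable def upW (u v : List A) : ℕ → A := appW u (iterW v)

/-- The right congruence `u ∼_L v`. -/
def SimL (L : Set (ℕ → A)) (u v : List A) : Prop :=
  ∀ w : ℕ → A, appW u w ∈ L ↔ appW v w ∈ L

/-- `(u,v) ≈_L ⊥`: `v ≠ ε` and `u(vx)^ω ∉ L` for all `x` with `uvx ∼_L u`. -/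
def ApproxBot (L : Set (ℕ → A)) (u v : List A) : Prop :=
  v ≠ [] ∧ ∀ x : List A, SimL L (u ++ v ++ x) u → upW u (v ++ x) ∉ L

/-- The safe language of a pair: `sfl(u,v) = {x | (u,vx) not ≈_L ⊥}`. -/
def Sfl (L : Set (ℕ → A)) (u v : List A) : Set (List A) :=
  { x | ¬ ApproxBot L u (v ++ x) }

/-- `(u,v) ≡_L (u',v')`. -/
def EquivL (L : Set (ℕ → A)) (u v u' v' : List A) : Prop :=
  SimL L (u ++ v) (u' ++ v') ∧ Sfl L u v = Sfl L u' v'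

/-- `(u,v)` is pointed. -/
def IsPointed (L : Set (ℕ → A)) (u v : List A) : Prop :=
  ¬ ApproxBot L u v ∧
    ∀ u₁ u₂ : List A, SimL L (u₁ ++ u₂) u → ¬ ApproxBot L u₁ (u₂ ++ v) →
      Sfl L u v = Sfl L u₁ (u₂ ++ v)

/-- `(u,v) ≈_L (u',v')` (for pairs with nonempty second components). -/
def ApproxL (L : Set (ℕ → A)) (u v u' v' : List A) : Prop :=
  SimL L u u' ∧ SimL L (u ++ v) (u' ++ v') ∧
    ∀ x : List A, SimL L (u ++ v ++ x) u →
      (upW u (v ++ x) ∈ L ↔ upW u' (v' ++ x) ∈ L)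

/-- `L` is recognized by some (total) deterministic co-Büchi automaton. -/
def DCWRecognizable (L : Set (ℕ → A)) : Prop :=
  ∃ (Q : Type) (_ : Fintype Q) (M : CoBuchi A Q), M.Deterministic ∧ M.Lang = L

/-- IsPointed pairs. -/
def PointedPair (L : Set (ℕ → A)) : Type :=
  { p : List A × List A // IsPointed L p.1 p.2 }

/-- `≡_L` as a setoid on all pairs. -/
def equivLSetoid (L : Set (ℕ → A)) : Setoid (List A × List A) where
  r p q := EquivL L p.1 p.2 q.1 q.2
  iseqv := {
    refl := fun p => ⟨fun w => Iff.rfl, rfl⟩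
    symm := fun h => ⟨fun w => (h.1 w).symm, h.2.symm⟩
    trans := fun h g => ⟨fun w => (h.1 w).trans (g.1 w), h.2.trans g.2⟩ }

/-- `≡_L` as a setoid on pointed pairs. -/
def canonSetoid (L : Set (ℕ → A)) : Setoid (PointedPair L) where
  r p q := EquivL L p.1.1 p.1.2 q.1.1 q.1.2
  iseqv := {
    refl := fun p => ⟨fun w => Iff.rfl, rfl⟩
    symm := fun h => ⟨fun w => (h.1 w).symm, h.2.symm⟩
    trans := fun h g => ⟨fun w => (h.1 w).trans (g.1 w), h.2.trans g.2⟩ }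

/-- States of the canonical automaton: `≡_L`-classes of pointed pairs. -/
def CanonState (L : Set (ℕ → A)) : Type := Quotient (canonSetoid L)

/-- The class `⟦u,v⟧` of a pointed pair. -/
def cls (L : Set (ℕ → A)) (u v : List A) (h : IsPointed L u v) : CanonState L :=
  Quotient.mk (canonSetoid L) ⟨(u, v), h⟩

/-- The canonical automaton `A_{≡_L}`. -/
def canonAut (L : Set (ℕ → A)) : CoBuchi A (CanonState L) where
  init := { s | ∃ (u v : List A) (h : IsPointed L u v),
              s = cls L u v h ∧ SimL L (u ++ v) [] }
  delta := { t |
    (∃ (u v : List A) (h : IsPointed L u v) (h' : IsPointed L u (v ++ [t.2.1])),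
        ¬ ApproxBot L u (v ++ [t.2.1]) ∧
        t.1 = cls L u v h ∧ t.2.2.1 = Rk.two ∧
        t.2.2.2 = cls L u (v ++ [t.2.1]) h') ∨
    (∃ (u v u' v' : List A) (h : IsPointed L u v) (h' : IsPointed L u' v'),
        SimL L (u ++ v ++ [t.2.1]) (u' ++ v') ∧
        t.1 = cls L u v h ∧ t.2.2.1 = Rk.one ∧ t.2.2.2 = cls L u' v' h') }

/-- `θ(u,v)`: states of `A_{≡_L}` reachable by reading `u` from an initial state
(any ranks) and then `v` via rank-2 transitions only. -/
def theta (L : Set (ℕ → A)) (u v : List A) : Set (CanonState L) :=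
  { q | ∃ p₀ ∈ (canonAut L).init, ∃ p,
          (canonAut L).Reach p₀ u p ∧ (canonAut L).SafeReach p v q }

/-- `(u,v)` is supported: `θ(u,v) ≠ ∅`. -/
def Supported (L : Set (ℕ → A)) (u v : List A) : Prop := (theta L u v).Nonempty

/-- `(u,v)` is double-supported: two distinct states of `θ(u,v)` in the same safe SCC. -/
def DoubleSupported (L : Set (ℕ → A)) (u v : List A) : Prop :=
  ∃ q ∈ theta L u v, ∃ q' ∈ theta L u v, q ≠ q' ∧ (canonAut L).SameSafeSCC q q'

/-- `(u,v)` is single-supported. -/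
def SingleSupported (L : Set (ℕ → A)) (u v : List A) : Prop :=
  Supported L u v ∧ ¬ DoubleSupported L u v

/-- `w` concatenated with itself `m` times. -/
def repCat (w : List A) : ℕ → List A
  | 0 => []
  | Nat.succ m => w ++ repCat w m

end LangDefs

section AuxProof4

variable {A Q : Type} [Nonempty A]

/-- The unique transition of a deterministic automaton. -/
noncomputable def dstep (M : CoBuchi A Q) (hd : M.Deterministic) (q : Q) (a : A) : Rk × Q :=
  (hd.2 q a).exists.choose

lemma dstep_mem (M : CoBuchi A Q) (hd : M.Deterministic) (q : Q) (a : A) :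
    (q, a, (dstep M hd q a).1, (dstep M hd q a).2) ∈ M.delta :=
  (hd.2 q a).exists.choose_spec

lemma dstep_uniq (M : CoBuchi A Q) (hd : M.Deterministic) {q : Q} {a : A} {r : Rk} {q' : Q}
    (h : (q, a, r, q') ∈ M.delta) : (r, q') = dstep M hd q a := by
  obtain ⟨t, ht, hu⟩ := hd.2 q a
  rw [hu (r, q') h, hu (dstep M hd q a) (dstep_mem M hd q a)]

/-- Deterministic run on a finite word. -/
noncomputable def drun (M : CoBuchi A Q) (hd : M.Deterministic) : List A → Q → Q
  | [], q => q
  | a :: w, q => drun M hd w (dstep M hd q a).2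

/-- Whether the deterministic run on a finite word uses only rank-2 transitions. -/
noncomputable def dsafe (M : CoBuchi A Q) (hd : M.Deterministic) : List A → Q → Bool
  | [], _ => true
  | a :: w, q => (decide ((dstep M hd q a).1 = Rk.two)) && dsafe M hd w (dstep M hd q a).2

/-- Deterministic run on an infinite word. -/
noncomputable def irun (M : CoBuchi A Q) (hd : M.Deterministic) (w : ℕ → A) (q : Q) : ℕ → Q
  | 0 => q
  | n + 1 => (dstep M hd (irun M hd w q n) (w n)).2

/-- Ranks along the deterministic run on an infinite word. -/
noncomputable def irk (M : CoBuchi A Q) (hd : M.Deterministic) (w : ℕ → A) (q : Q) (n : ℕ) :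
    Rk := (dstep M hd (irun M hd w q n) (w n)).1

lemma drun_append (M : CoBuchi A Q) (hd : M.Deterministic) (u v : List A) :
    ∀ q, drun M hd (u ++ v) q = drun M hd v (drun M hd u q) := by
  induction u with
  | nil => intro q; rfl
  | cons a u ih => intro q; simp [drun, ih]

lemma dsafe_append (M : CoBuchi A Q) (hd : M.Deterministic) (u v : List A) :
    ∀ q, dsafe M hd (u ++ v) q = (dsafe M hd u q && dsafe M hd v (drun M hd u q)) := by
  induction u with
  | nil => intro q; rfl
  | cons a u ih => intro q; simp [dsafe, drun, ih, Bool.and_assoc]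

lemma irun_cons (M : CoBuchi A Q) (hd : M.Deterministic) (a : A) (w : ℕ → A) (q : Q) :
    ∀ n, irun M hd (CoBuchi.consW a w) q (n + 1) = irun M hd w (dstep M hd q a).2 n := by
  intro n
  induction n with
  | zero => rfl
  | succ n ih => show (dstep M hd _ _).2 = _; rw [ih]; rfl

lemma irk_cons (M : CoBuchi A Q) (hd : M.Deterministic) (a : A) (w : ℕ → A) (q : Q) (n : ℕ) :
    irk M hd (CoBuchi.consW a w) q (n + 1) = irk M hd w (dstep M hd q a).2 n := by
  unfold irk; rw [irun_cons]; rfl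

lemma appW_nil (w : ℕ → A) : appW ([] : List A) w = w := by
  funext n; simp [appW]

lemma appW_cons (a : A) (u : List A) (w : ℕ → A) :
    appW (a :: u) w = CoBuchi.consW a (appW u w) := by
  funext n
  cases n with
  | zero => simp [appW, CoBuchi.consW]
  | succ n =>
    simp only [appW, CoBuchi.consW, List.length_cons]
    by_cases h : n < u.length
    · rw [dif_pos (Nat.succ_lt_succ h), dif_pos h]
      rfl
    · rw [dif_neg (by omega), dif_neg h]
      congr 1
      omega

lemma irun_appW (M : CoBuchi A Q) (hd : M.Deterministic) (w : ℕ → A) (u : List A) :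
    ∀ q k, irun M hd (appW u w) q (u.length + k) = irun M hd w (drun M hd u q) k := by
  induction u with
  | nil => intro q k; rw [appW_nil]; simp [drun]
  | cons a u ih =>
    intro q k
    rw [appW_cons]
    have : (a :: u).length + k = (u.length + k) + 1 := by simp [List.length_cons]; omega
    rw [this, irun_cons, ih]
    rfl

lemma irk_appW (M : CoBuchi A Q) (hd : M.Deterministic) (w : ℕ → A) (u : List A) (q : Q)
    (k : ℕ) : irk M hd (appW u w) q (u.length + k) = irk M hd w (drun M hd u q) k := by
  induction u generalizing q with
  | nil => rw [appW_nil]; simp [drun]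
  | cons a u ih =>
    rw [appW_cons]
    have : (a :: u).length + k = (u.length + k) + 1 := by simp [List.length_cons]; omega
    rw [this, irk_cons, ih]
    rfl

lemma run_uniq (M : CoBuchi A Q) (hd : M.Deterministic) (w : ℕ → A) (q : Q)
    (ρ : ℕ → Q) (r : ℕ → Rk) (h0 : ρ 0 = q)
    (hstep : ∀ n, (ρ n, w n, r n, ρ (n + 1)) ∈ M.delta) :
    ∀ n, ρ n = irun M hd w q n ∧ r n = irk M hd w q n := by
  have key : ∀ n, ρ n = irun M hd w q n := by
    intro n
    induction n with
    | zero => exact h0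
    | succ n ih =>
      have := dstep_uniq M hd (hstep n)
      rw [ih] at this
      show ρ (n+1) = (dstep M hd (irun M hd w q n) (w n)).2
      rw [← this]
  intro n
  refine ⟨key n, ?_⟩
  have := dstep_uniq M hd (hstep n)
  rw [key n] at this
  show r n = (dstep M hd (irun M hd w q n) (w n)).1
  rw [← this]

lemma langFrom_iff (M : CoBuchi A Q) (hd : M.Deterministic) (w : ℕ → A) (q : Q) :
    w ∈ M.LangFrom q ↔ ∃ N, ∀ n, N ≤ n → irk M hd w q n = Rk.two := by
  constructor
  · rintro ⟨ρ, r, h0, hstep, N, hN⟩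
    refine ⟨N, fun n hn => ?_⟩
    rw [← (run_uniq M hd w q ρ r h0 hstep n).2]
    exact hN n hn
  · rintro ⟨N, hN⟩
    exact ⟨irun M hd w q, irk M hd w q, rfl, fun n => dstep_mem M hd _ _, N, hN⟩

variable (M : CoBuchi A Q) (hd : M.Deterministic) (L : Set (ℕ → A)) (q0 : Q)
  (hq0 : ∀ q, q ∈ M.init ↔ q = q0) (hL : M.Lang = L)

include hq0 hL in
lemma memL_iff (w : ℕ → A) :
    w ∈ L ↔ ∃ N, ∀ n, N ≤ n → irk M hd w q0 n = Rk.two := by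
  rw [← hL]
  constructor
  · rintro ⟨q, hq, hw⟩
    rw [hq0 q] at hq
    rw [hq] at hw
    exact (langFrom_iff M hd w q0).1 hw
  · intro h
    exact ⟨q0, (hq0 q0).2 rfl, (langFrom_iff M hd w q0).2 h⟩

include hq0 hL in
lemma appW_memL (u : List A) (w : ℕ → A) :
    appW u w ∈ L ↔ ∃ N, ∀ n, N ≤ n → irk M hd w (drun M hd u q0) n = Rk.two := by
  rw [memL_iff M hd L q0 hq0 hL]
  constructor
  · rintro ⟨N, hN⟩
    refine ⟨N, fun n hn => ?_⟩
    rw [← irk_appW M hd w u q0 n]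
    exact hN _ (le_trans hn (Nat.le_add_left _ _))
  · rintro ⟨N, hN⟩
    refine ⟨u.length + N, fun n hn => ?_⟩
    have hn' : n = u.length + (n - u.length) := by omega
    rw [hn', irk_appW M hd w u q0]
    exact hN _ (by omega)

include hq0 hL in
lemma simL_congr {a b a' b' : List A}
    (h1 : drun M hd a q0 = drun M hd a' q0) (h2 : drun M hd b q0 = drun M hd b' q0) :
    SimL L a b ↔ SimL L a' b' := by
  unfold SimL
  apply forall_congr'
  intro w
  rw [appW_memL M hd L q0 hq0 hL, appW_memL M hd L q0 hq0 hL,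
    appW_memL M hd L q0 hq0 hL, appW_memL M hd L q0 hq0 hL, h1, h2]

lemma iterW_fix {y : List A} (hy : y ≠ []) : appW y (iterW y) = iterW y := by
  funext n
  have hlen : 0 < y.length := List.length_pos_iff.mpr hy
  simp only [appW, iterW, dif_neg hy]
  by_cases h : n < y.length
  · rw [dif_pos h]
    congr 1
    exact Fin.ext (Nat.mod_eq_of_lt h).symm
  · rw [dif_neg h]
    congr 1
    exact Fin.ext ((Nat.mod_eq_sub_mod (by omega)).symm)

lemma irun_iter {y : List A} (hy : y ≠ []) (q : Q) :
    ∀ i k, irun M hd (iterW y) q (i * y.length + k)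
      = irun M hd (iterW y) ((drun M hd y)^[i] q) k := by
  intro i
  induction i generalizing q with
  | zero => intro k; simp
  | succ i ih =>
    intro k
    have harith : (i + 1) * y.length + k = y.length + (i * y.length + k) := by ring
    rw [harith, ← iterW_fix hy, irun_appW M hd (iterW y) y q, iterW_fix hy, ih, Function.iterate_succ_apply]

lemma irk_iter {y : List A} (hy : y ≠ []) (q : Q) :
    ∀ i k, irk M hd (iterW y) q (i * y.length + k)
      = irk M hd (iterW y) ((drun M hd y)^[i] q) k := by
  intro i
  induction i generalizing q with
  | zero => intro k; simp
  | succ i ih =>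
    intro k
    have harith : (i + 1) * y.length + k = y.length + (i * y.length + k) := by ring
    rw [harith, ← iterW_fix hy, irk_appW M hd (iterW y) y q, iterW_fix hy, ih, Function.iterate_succ_apply]

lemma dsafe_iff (w : ℕ → A) (y : List A) :
    ∀ q, dsafe M hd y q = true ↔ ∀ k, k < y.length → irk M hd (appW y w) q k = Rk.two := by
  induction y with
  | nil => intro q; simp [dsafe]
  | cons a y ih =>
    intro q
    rw [appW_cons]
    have h0 : irk M hd (CoBuchi.consW a (appW y w)) q 0 = (dstep M hd q a).1 := rfl
    constructor
    · intro h k hk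
      simp only [dsafe, Bool.and_eq_true, decide_eq_true_iff] at h
      cases k with
      | zero => rw [h0, h.1]
      | succ k =>
        rw [irk_cons]
        exact (ih _).1 h.2 k (by simpa [List.length_cons] using hk)
    · intro h
      simp only [dsafe, Bool.and_eq_true, decide_eq_true_iff]
      constructor
      · rw [← h0]; exact h 0 (by simp)
      · refine (ih _).2 (fun k hk => ?_)
        rw [← irk_cons M hd a (appW y w) q k]
        exact h (k + 1) (by simpa [List.length_cons] using hk)

include hq0 hL in
lemma upW_memL (u : List A) {y : List A} (hy : y ≠ []) :
    upW u y ∈ L ↔ ∃ I, ∀ i, I ≤ i →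
      dsafe M hd y ((drun M hd y)^[i] (drun M hd u q0)) = true := by
  have hlen : 0 < y.length := List.length_pos_iff.mpr hy
  rw [upW, appW_memL M hd L q0 hq0 hL]
  set p := drun M hd u q0 with hp
  constructor
  · rintro ⟨N, hN⟩
    refine ⟨N, fun i hi => ?_⟩
    rw [dsafe_iff M hd (iterW y) y]
    intro k hk
    rw [iterW_fix hy, ← irk_iter M hd hy p i k]
    refine hN _ ?_
    calc N ≤ i := hi
    _ ≤ i * y.length := Nat.le_mul_of_pos_right i hlen
    _ ≤ i * y.length + k := Nat.le_add_right _ _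
  · rintro ⟨I, hI⟩
    refine ⟨I * y.length, fun n hn => ?_⟩
    have hdm : n = (n / y.length) * y.length + n % y.length := by
      rw [Nat.div_add_mod'] -- n / m * m + n % m = n ?
    have hi : I ≤ n / y.length := Nat.le_div_iff_mul_le hlen |>.2 hn
    rw [hdm, irk_iter M hd hy p, ← iterW_fix hy]
    exact (dsafe_iff M hd (iterW y) y _).1 (hI _ hi) _ (Nat.mod_lt _ hlen)

include hq0 hL in
/-- Key lemma: the invariant determines the `≡_L`-class. -/
lemma key_equiv {u v u' v' : List A}
    (h1 : drun M hd u q0 = drun M hd u' q0)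
    (h2 : ∀ q, drun M hd v q = drun M hd v' q)
    (h3 : ∀ q, dsafe M hd v q = dsafe M hd v' q)
    (h4 : v = [] ↔ v' = []) : EquivL L u v u' v' := by
  have hdr : ∀ a b : List A, ∀ q, drun M hd (a ++ b) q = drun M hd b (drun M hd a q) :=
    fun a b q => drun_append M hd a b q
  constructor
  · refine (simL_congr M hd L q0 hq0 hL ?_ rfl).2 (fun w => Iff.rfl)
    rw [hdr, hdr, h1, h2]
  · ext x
    show ¬ ApproxBot L u (v ++ x) ↔ ¬ ApproxBot L u' (v' ++ x)
    apply not_congr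
    by_cases hvx : v ++ x = []
    · have hvx' : v' ++ x = [] := by
        rcases List.append_eq_nil_iff.1 hvx with ⟨hv, hx⟩
        rw [h4.1 hv, hx]; rfl
      unfold ApproxBot
      simp [hvx, hvx']
    · have hvx' : v' ++ x ≠ [] := by
        intro hc
        rcases List.append_eq_nil_iff.1 hc with ⟨hv, hx⟩
        exact hvx (by rw [h4.2 hv, hx]; rfl)
      unfold ApproxBot
      apply and_congr
      · exact iff_of_true hvx hvx'
      · apply forall_congr'
        intro z
        apply imp_congr
        · apply simL_congr M hd L q0 hq0 hL _ h1
          rw [hdr, hdr, hdr, hdr, hdr, hdr, h1, h2]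
        · have hy : (v ++ x) ++ z ≠ [] := by
            intro hc; exact hvx (List.append_eq_nil_iff.1 hc).1
          have hy' : (v' ++ x) ++ z ≠ [] := by
            intro hc; exact hvx' (List.append_eq_nil_iff.1 hc).1
          apply not_congr
          rw [upW_memL M hd L q0 hq0 hL u hy, upW_memL M hd L q0 hq0 hL u' hy']
          have hfun : drun M hd ((v ++ x) ++ z) = drun M hd ((v' ++ x) ++ z) := by
            funext q
            simp only [List.append_assoc, drun_append, h2]
          have hsafe : dsafe M hd ((v ++ x) ++ z) = dsafe M hd ((v' ++ x) ++ z) := by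
            funext q
            simp only [List.append_assoc, dsafe_append, drun_append, h2, h3]
          rw [hfun, hsafe, h1]

end AuxProof4

/-- if `L` is recognized by a deterministic co-Büchi automaton
then `≡_L` has finitely many equivalence classes. -/
theorem stmt4 {A : Type} [Nonempty A] [Fintype A] (L : Set (ℕ → A))
    (hrec : DCWRecognizable L) :
    Finite (Quotient (equivLSetoid L)) := by
  classical
  obtain ⟨Q, instQ, M, hd, hL⟩ := hrec
  haveI := instQ
  obtain ⟨q0, hq0mem, hq0uniq⟩ := hd.1
  have hq0 : ∀ q, q ∈ M.init ↔ q = q0 := fun q => ⟨fun h => hq0uniq q h, fun h => h ▸ hq0mem⟩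
  set Φ : List A × List A → Q × (Q → Q × Bool) × Bool :=
    fun p => (drun M hd p.1 q0, fun q => (drun M hd p.2 q, dsafe M hd p.2 q),
      if p.2 = [] then true else false) with hΦ
  have hkey : ∀ p p' : List A × List A, Φ p = Φ p' → (equivLSetoid L).r p p' := by
    rintro ⟨u, v⟩ ⟨u', v'⟩ h
    simp only [hΦ, Prod.mk.injEq] at h
    obtain ⟨h1, h2, h3⟩ := h
    have h2' : ∀ q, drun M hd v q = drun M hd v' q := fun q =>
      congrArg Prod.fst (congrFun h2 q)
    have h3' : ∀ q, dsafe M hd v q = dsafe M hd v' q := fun q =>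
      congrArg Prod.snd (congrFun h2 q)
    have h4 : v = [] ↔ v' = [] := by
      by_cases hv : v = [] <;> by_cases hv' : v' = [] <;>
        simp [hv, hv'] at h3 ⊢
    show EquivL L u v u' v'
    exact key_equiv M hd L q0 hq0 hL h1 h2' h3' h4
  let g : Q × (Q → Q × Bool) × Bool → Quotient (equivLSetoid L) :=
    fun s => if h : ∃ p, Φ p = s then Quotient.mk _ h.choose
      else Quotient.mk _ ([], [])
  have hsurj : Function.Surjective g := by
    intro c
    obtain ⟨p, rfl⟩ := Quotient.exists_rep c
    refine ⟨Φ p, ?_⟩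
    have h : ∃ p', Φ p' = Φ p := ⟨p, rfl⟩
    simp only [g, dif_pos h]
    exact Quotient.sound (hkey _ _ h.choose_spec)
  exact Finite.of_surjective g hsurj
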